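/- Proposition 4.1 (monotonicity of the fixed-point update map): Let γ > 0 and F : ℝ × ℝ → ℝ with p ↦ F(p,x) differentiable and −γ ≤ ∂F/∂p(p,x) ≤ −1/γ for all (p,x). Let β₁, β₂, β₃ ≥ 0, β₁ + β₂ + β₃ = 1, and α > max{β₁,β₃}·γ. Let ρ > 0 satisfy ρ·(2α + β₂γ) ≤ 1. Let n ≥ 1, x₁,…,x_n ∈ ℝ, and fix end data w₀, w_{n+1} ∈ ℝ. Define S : ℝⁿ → ℝⁿ by (S W)_j := W_j + ρ·F̂_β(W_{j−1}, W_j, W_{j+1}, x_j) for j = 1,…,n, where W₀ := w₀ and W_{n+1} := w_{n+1}. Then S is monotone: if W_j ≤ V_j for all j = 1,…,n, then (S W)_j ≤ (S V)_j for all j = 1,…,n. -/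

import Mathlib

/-- Extension of a vector `W ∈ ℝⁿ` (indexed by grid points `1,…,n`) to all integer indices,
using the prescribed end data `w₀` at indices `≤ 0` and `w_{n+1}` at indices `≥ n+1`. -/
noncomputable def gridExt (n : ℕ) (w₀ wn1 : ℝ) (W : Fin n → ℝ) (i : ℤ) : ℝ :=
  if h : 1 ≤ i ∧ i ≤ (n : ℤ) then W ⟨(i - 1).toNat, by omega⟩
  else if i ≤ 0 then w₀ else wn1

/-- The Lax–Friedrichs-like numerical operator
`F̂_β(p₁,p₂,p₃,x) := F(β₁p₁ + β₂p₂ + β₃p₃, x) + α(p₁ − 2p₂ + p₃)`. -/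
noncomputable def laxFriedrichsOp (F : ℝ → ℝ → ℝ) (β₁ β₂ β₃ α : ℝ)
    (p₁ p₂ p₃ x : ℝ) : ℝ :=
  F (β₁ * p₁ + β₂ * p₂ + β₃ * p₃) x + α * (p₁ - 2 * p₂ + p₃)

/-- The fixed-point update map `S : ℝⁿ → ℝⁿ`,
`(S W)_j := W_j + ρ F̂_β(W_{j−1}, W_j, W_{j+1}, x_j)` for `j = 1,…,n`, where
`W₀ := w₀` and `W_{n+1} := w_{n+1}`.  (Index `j : Fin n` corresponds to grid index `j+1`,
so the neighbors have integer indices `j` and `j+2`.) -/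
noncomputable def updateMap (F : ℝ → ℝ → ℝ) (β₁ β₂ β₃ α ρ : ℝ) (n : ℕ)
    (w₀ wn1 : ℝ) (x : Fin n → ℝ) (W : Fin n → ℝ) : Fin n → ℝ :=
  fun j =>
    W j + ρ * laxFriedrichsOp F β₁ β₂ β₃ α
      (gridExt n w₀ wn1 W ((j : ℕ) : ℤ)) (W j) (gridExt n w₀ wn1 W (((j : ℕ) : ℤ) + 2)) (x j)

/-- Proposition 4.1 (monotonicity of the fixed-point update map): under the structure
condition `−γ ≤ ∂F/∂p ≤ −1/γ`, with `β₁,β₂,β₃ ≥ 0`, `β₁+β₂+β₃ = 1`,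
`α > max{β₁,β₃}·γ`, and `0 < ρ` with `ρ(2α + β₂γ) ≤ 1`, the map `S` is monotone:
`W ≤ V` componentwise implies `S W ≤ S V` componentwise. -/

lemma aux_mono (F : ℝ → ℝ → ℝ) (x : ℝ) (hFdiff : Differentiable ℝ fun p => F p x)
    (A ρ μ k : ℝ)
    (hbound : ∀ p : ℝ, 0 ≤ A + ρ * μ * deriv (fun q => F q x) p) :
    Monotone (fun t => A * t + ρ * F (μ * t + k) x) := by
  have hder : ∀ t : ℝ, HasDerivAt (fun t => A * t + ρ * F (μ * t + k) x)
      (A + ρ * μ * deriv (fun q => F q x) (μ * t + k)) t := by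
    intro t
    have h1 : HasDerivAt (fun t : ℝ => μ * t + k) μ t := by
      simpa using ((hasDerivAt_id t).const_mul μ).add_const k
    have h2 : HasDerivAt (fun p => F p x) (deriv (fun q => F q x) (μ * t + k)) (μ * t + k) :=
      (hFdiff _).hasDerivAt
    have h3 := (h2.comp t h1).const_mul ρ
    have h4 := ((hasDerivAt_id t).const_mul A).add h3
    rw [show A + ρ * μ * deriv (fun q => F q x) (μ * t + k) = A * 1 + ρ * (deriv (fun q => F q x) (μ * t + k) * μ) by ring]
    exact h4
  apply monotone_of_deriv_nonneg
  · exact fun t => (hder t).differentiableAt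
  · intro t
    rw [(hder t).deriv]
    exact hbound _

lemma key_ineq (γ : ℝ) (hγ : 0 < γ) (F : ℝ → ℝ → ℝ)
    (hFdiff : ∀ x : ℝ, Differentiable ℝ fun p => F p x)
    (hFderiv : ∀ p x : ℝ, deriv (fun q => F q x) p ∈ Set.Icc (-γ) (-(1 / γ)))
    (β₁ β₂ β₃ : ℝ) (hβ₁ : 0 ≤ β₁) (hβ₂ : 0 ≤ β₂) (hβ₃ : 0 ≤ β₃)
    (α : ℝ) (hα : max β₁ β₃ * γ < α)
    (ρ : ℝ) (hρ : 0 < ρ) (hρsmall : ρ * (2 * α + β₂ * γ) ≤ 1)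
    (x a b c a' b' c' : ℝ) (ha : a ≤ a') (hb : b ≤ b') (hc : c ≤ c') :
    b + ρ * (F (β₁ * a + β₂ * b + β₃ * c) x + α * (a - 2 * b + c)) ≤
    b' + ρ * (F (β₁ * a' + β₂ * b' + β₃ * c') x + α * (a' - 2 * b' + c')) := by
  have hα₁ : β₁ * γ < α := lt_of_le_of_lt (by nlinarith [le_max_left β₁ β₃]) hα
  have hα₃ : β₃ * γ < α := lt_of_le_of_lt (by nlinarith [le_max_right β₁ β₃]) hα
  -- step 1: a → a'
  have s1 : b + ρ * (F (β₁ * a + β₂ * b + β₃ * c) x + α * (a - 2 * b + c)) ≤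
      b + ρ * (F (β₁ * a' + β₂ * b + β₃ * c) x + α * (a' - 2 * b + c)) := by
    have hm := aux_mono F x (hFdiff x) (ρ * α) ρ β₁ (β₂ * b + β₃ * c) (fun p => by
      have h := (hFderiv p x).1
      nlinarith [mul_nonneg (mul_nonneg hρ.le hβ₁) (show 0 ≤ deriv (fun q => F q x) p + γ by linarith),
        mul_pos hρ (show (0:ℝ) < α - β₁ * γ by linarith)])
    have := hm ha
    simp only at this
    have e1 : β₁ * a + β₂ * b + β₃ * c = β₁ * a + (β₂ * b + β₃ * c) := by ring
    have e2 : β₁ * a' + β₂ * b + β₃ * c = β₁ * a' + (β₂ * b + β₃ * c) := by ring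
    rw [e1, e2]; nlinarith [this]
  -- step 2: c → c'
  have s2 : b + ρ * (F (β₁ * a' + β₂ * b + β₃ * c) x + α * (a' - 2 * b + c)) ≤
      b + ρ * (F (β₁ * a' + β₂ * b + β₃ * c') x + α * (a' - 2 * b + c')) := by
    have hm := aux_mono F x (hFdiff x) (ρ * α) ρ β₃ (β₁ * a' + β₂ * b) (fun p => by
      have h := (hFderiv p x).1
      nlinarith [mul_nonneg (mul_nonneg hρ.le hβ₃) (show 0 ≤ deriv (fun q => F q x) p + γ by linarith),
        mul_pos hρ (show (0:ℝ) < α - β₃ * γ by linarith)])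
    have := hm hc
    simp only at this
    have e1 : β₁ * a' + β₂ * b + β₃ * c = β₃ * c + (β₁ * a' + β₂ * b) := by ring
    have e2 : β₁ * a' + β₂ * b + β₃ * c' = β₃ * c' + (β₁ * a' + β₂ * b) := by ring
    rw [e1, e2]; nlinarith [this]
  -- step 3: b → b'
  have s3 : b + ρ * (F (β₁ * a' + β₂ * b + β₃ * c') x + α * (a' - 2 * b + c')) ≤
      b' + ρ * (F (β₁ * a' + β₂ * b' + β₃ * c') x + α * (a' - 2 * b' + c')) := by
    have hm := aux_mono F x (hFdiff x) (1 - 2 * ρ * α) ρ β₂ (β₁ * a' + β₃ * c') (fun p => by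
      have h := (hFderiv p x).1
      nlinarith [mul_nonneg (mul_nonneg hρ.le hβ₂) (show 0 ≤ deriv (fun q => F q x) p + γ by linarith)])
    have := hm hb
    simp only at this
    have e1 : β₁ * a' + β₂ * b + β₃ * c' = β₂ * b + (β₁ * a' + β₃ * c') := by ring
    have e2 : β₁ * a' + β₂ * b' + β₃ * c' = β₂ * b' + (β₁ * a' + β₃ * c') := by ring
    rw [e1, e2]; nlinarith [this]
  linarith

lemma gridExt_mono (n : ℕ) (w₀ wn1 : ℝ) (W V : Fin n → ℝ) (hWV : ∀ j, W j ≤ V j) (i : ℤ) :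
    gridExt n w₀ wn1 W i ≤ gridExt n w₀ wn1 V i := by
  unfold gridExt
  split
  · exact hWV _
  · split <;> exact le_rfl

theorem updateMap_monotone (γ : ℝ) (hγ : 0 < γ) (F : ℝ → ℝ → ℝ)
    (hFdiff : ∀ x : ℝ, Differentiable ℝ fun p => F p x)
    (hFderiv : ∀ p x : ℝ, deriv (fun q => F q x) p ∈ Set.Icc (-γ) (-(1 / γ)))
    (β₁ β₂ β₃ : ℝ) (hβ₁ : 0 ≤ β₁) (hβ₂ : 0 ≤ β₂) (hβ₃ : 0 ≤ β₃)
    (hsum : β₁ + β₂ + β₃ = 1)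
    (α : ℝ) (hα : max β₁ β₃ * γ < α)
    (ρ : ℝ) (hρ : 0 < ρ) (hρsmall : ρ * (2 * α + β₂ * γ) ≤ 1)
    (n : ℕ) (hn : 1 ≤ n) (x : Fin n → ℝ) (w₀ wn1 : ℝ) :
    ∀ W V : Fin n → ℝ, (∀ j, W j ≤ V j) →
      ∀ j, updateMap F β₁ β₂ β₃ α ρ n w₀ wn1 x W j ≤ updateMap F β₁ β₂ β₃ α ρ n w₀ wn1 x V j := by
  intro W V hWV j
  unfold updateMap laxFriedrichsOp
  exact key_ineq γ hγ F hFdiff hFderiv β₁ β₂ β₃ hβ₁ hβ₂ hβ₃ α hα ρ hρ hρsmall (x j)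
    _ _ _ _ _ _ (gridExt_mono n w₀ wn1 W V hWV _) (hWV j) (gridExt_mono n w₀ wn1 W V hWV _)
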